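/- Let A ∈ ℂ^{n×m}, let X = diag(x_1,…,x_n) and Y = diag(y_1,…,y_m) be diagonal matrices, and let G ∈ ℂ^{n×p}, B ∈ ℂ^{p×m} satisfy the Sylvester displacement equation X A − A Y = G B. Let (i,j) be a pivot with A_{ij} ≠ 0, and define the Schur complement A^{(1)} = A − (1/A_{ij}) A_{:,j} A_{i,:} and the updated generators G^{(1)} = G − (1/A_{ij}) A_{:,j} G_{i,:} and B^{(1)} = B − (1/A_{ij}) B_{:,j} A_{i,:}. Then X A^{(1)} − A^{(1)} Y = G^{(1)} B^{(1)}. In particular, the Schur complement of a Cauchy-like matrix is Cauchy-like with displacement rank at most p. -/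

import Mathlib

open Matrix

lemma mul_std_mul {n m q r : ℕ} (M : Matrix (Fin n) (Fin m) ℂ)
    (N : Matrix (Fin q) (Fin r) ℂ) (j : Fin m) (i : Fin q) :
    M * Matrix.single j i (1 : ℂ) * N =
      Matrix.of (fun a b => M a j * N i b) := by
  ext a b
  simp [Matrix.mul_apply, Matrix.single, Finset.sum_mul, ite_and,
    Finset.mul_sum]

/-- **Theorem (Schur complements of Cauchy-like matrices are Cauchy-like).**
Suppose `X A − A Y = G B` with `X = diag(x)`, `Y = diag(y)`, `G ∈ ℂ^{n×p}`, `B ∈ ℂ^{p×m}`,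
and let `(i,j)` be a pivot with `A_{ij} ≠ 0`.  With
`A¹ = A − A_{ij}⁻¹ A_{:,j} A_{i,:}`, `G¹ = G − A_{ij}⁻¹ A_{:,j} G_{i,:}`,
`B¹ = B − A_{ij}⁻¹ B_{:,j} A_{i,:}` (written via `e_j e_iᵀ = stdBasisMatrix j i 1`),
one has `X A¹ − A¹ Y = G¹ B¹`; in particular the Schur complement is Cauchy-like with
displacement rank at most `p`. -/
theorem cauchyLike_schur_complement {n m p : ℕ}
    (A : Matrix (Fin n) (Fin m) ℂ) (x : Fin n → ℂ) (y : Fin m → ℂ)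
    (G : Matrix (Fin n) (Fin p) ℂ) (B : Matrix (Fin p) (Fin m) ℂ)
    (hdisp : Matrix.diagonal x * A - A * Matrix.diagonal y = G * B)
    (i : Fin n) (j : Fin m) (hpiv : A i j ≠ 0) :
    Matrix.diagonal x *
        (A - (A i j)⁻¹ • (A * Matrix.single j i (1 : ℂ) * A)) -
      (A - (A i j)⁻¹ • (A * Matrix.single j i (1 : ℂ) * A)) * Matrix.diagonal y
    = (G - (A i j)⁻¹ • (A * Matrix.single j i (1 : ℂ) * G)) *
        (B - (A i j)⁻¹ • (B * Matrix.single j i (1 : ℂ) * A)) := by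
  have key : ∀ u v, x u * A u v - A u v * y v = ∑ k, G u k * B k v := by
    intro u v
    have := congrFun (congrFun hdisp u) v
    simpa [Matrix.mul_apply, Matrix.sub_apply, Matrix.diagonal_apply, ite_mul,
      mul_ite, zero_mul, mul_zero, Finset.sum_ite_eq, Finset.sum_ite_eq'] using this
  rw [mul_std_mul, mul_std_mul, mul_std_mul]
  ext a b
  set c := (A i j)⁻¹ with hc
  have expand : ∀ k ∈ Finset.univ,
      (G a k - c * (A a j * G i k)) * (B k b - c * (B k j * A i b)) =
      G a k * B k b - (c * A i b) * (G a k * B k j) - (c * A a j) * (G i k * B k b)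
        + (c * A a j * (c * A i b)) * (G i k * B k j) := fun k _ => by ring
  simp only [Matrix.sub_apply, Matrix.smul_apply, smul_eq_mul, Matrix.of_apply,
    Matrix.mul_apply, Matrix.diagonal_apply, ite_mul, mul_ite, zero_mul, mul_zero,
    Finset.sum_ite_eq, Finset.sum_ite_eq', Finset.mem_univ, if_true]
  rw [Finset.sum_congr rfl expand]
  simp only [Finset.sum_add_distrib, Finset.sum_sub_distrib, ← Finset.mul_sum,
    ← key]
  rw [hc]
  field_simp
  ring
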